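/- Let X be a compact Hausdorff space, ν ∈ H(X), and x ∈ X. Then x ∈ supp ν if and only if for every open neighborhood O of x there exists a > 0 such that ν(ψ, 0, 1) ≥ a for every continuous ψ : X → [0,1] with ψ|_O ≡ 1. -/

import Mathlib

open scoped Topology
open MeasureTheory

/-- The index set `S(X)`: triples `(φ, a, b)` with `φ : X → ℝ` continuous and
`0 ≤ a < b ≤ 1`. -/
structure SIdx (X : Type u) [TopologicalSpace X] : Type u where
  φ : C(X, ℝ)
  a : ℝ
  b : ℝ
  ha : 0 ≤ a
  hab : a < b
  hb : b ≤ 1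

/-- `α : ℝ → X` is a step function on `[0,1)`: there is a partition
`0 = t 0 < t 1 < ⋯ < t k = 1` with `α` constant on each `[t j, t (j+1))`. -/
def IsStep {X : Type u} (α : ℝ → X) : Prop :=
  ∃ (k : ℕ) (t : ℕ → ℝ), 1 ≤ k ∧ t 0 = 0 ∧ t k = 1 ∧ (∀ j < k, t j < t (j + 1)) ∧
    ∀ j < k, ∀ s ∈ Set.Ico (t j) (t (j + 1)), α s = α (t j)

/-- The embedding `e_X`, sending `α` to the point of `∏_{S(X)} ℝ` whose
`(φ, a, b)`-coordinate is `(1/(b-a)) ∫_a^b φ(α t) dt`. -/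
noncomputable def eHM {X : Type u} [TopologicalSpace X] (α : ℝ → X) : SIdx X → ℝ :=
  fun s => (1 / (s.b - s.a)) * ∫ t in s.a..s.b, s.φ (α t)

/-- `H(X)` as a subset of `∏_{S(X)} ℝ`: the closure of the image under `e_X`
of the set of step functions. -/
def HSet (X : Type u) [TopologicalSpace X] : Set (SIdx X → ℝ) :=
  closure (eHM '' {α : ℝ → X | IsStep α})

/-- `H(X)` as a topological space (subspace of the product `∏_{S(X)} ℝ`). -/
abbrev HSp (X : Type u) [TopologicalSpace X] : Type u := ↥(HSet X)

/-- `H_X(A)`: the closure of the image under `e_X` of the step functions taking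
values in `A` on `[0,1)`. -/
def HSetOn (X : Type u) [TopologicalSpace X] (A : Set X) : Set (SIdx X → ℝ) :=
  closure (eHM '' {α : ℝ → X | IsStep α ∧ ∀ t ∈ Set.Ico (0:ℝ) 1, α t ∈ A})

/-- The support of `ν`: the intersection of all closed `A ⊆ X` with `ν ∈ H_X(A)`. -/
def suppH {X : Type u} [TopologicalSpace X] (ν : SIdx X → ℝ) : Set X :=
  ⋂₀ {A : Set X | IsClosed A ∧ ν ∈ HSetOn X A}

/-- The reindexing map `R_f : ∏_{S(X)} ℝ → ∏_{S(Y)} ℝ`, `R_f x (ψ,a,b) = x (ψ∘f,a,b)`. -/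
def reindex {X : Type u} {Y : Type v} [TopologicalSpace X] [TopologicalSpace Y]
    (f : C(X, Y)) : (SIdx X → ℝ) → (SIdx Y → ℝ) :=
  fun x s => x ⟨s.φ.comp f, s.a, s.b, s.ha, s.hab, s.hb⟩

lemma isStep_comp {X : Type u} {Y : Type v} (f : X → Y) {α : ℝ → X} (h : IsStep α) :
    IsStep (f ∘ α) := by
  obtain ⟨k, t, hk, h0, h1, hm, hc⟩ := h
  exact ⟨k, t, hk, h0, h1, hm, fun j hj s hs => congrArg f (hc j hj s hs)⟩

lemma isStep_const {X : Type u} (x : X) : IsStep (fun _ : ℝ => x) :=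
  ⟨1, fun j => (j : ℝ), le_refl 1, by simp, by simp,
    fun j _ => by simp, fun _ _ _ _ => rfl⟩

/-- The point `e_X(α)` of `H(X)`, for a step function `α`. -/
noncomputable def toH {X : Type u} [TopologicalSpace X] (α : ℝ → X) (h : IsStep α) : HSp X :=
  ⟨eHM α, subset_closure ⟨α, h, rfl⟩⟩

lemma continuous_reindex {X : Type u} {Y : Type v} [TopologicalSpace X] [TopologicalSpace Y]
    (f : C(X, Y)) : Continuous (reindex f) :=
  continuous_pi fun _ => continuous_apply _

lemma reindex_mapsTo {X : Type u} {Y : Type v} [TopologicalSpace X] [TopologicalSpace Y]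
    (f : C(X, Y)) : Set.MapsTo (reindex f) (HSet X) (HSet Y) := by
  intro x hx
  have h2 := image_closure_subset_closure_image (s := eHM '' {α : ℝ → X | IsStep α})
    (continuous_reindex f)
  have h3 : reindex f '' (eHM '' {α : ℝ → X | IsStep α}) ⊆ eHM '' {α : ℝ → Y | IsStep α} := by
    rintro _ ⟨_, ⟨α, hα, rfl⟩, rfl⟩
    exact ⟨f ∘ α, isStep_comp f hα, rfl⟩
  exact closure_mono h3 (h2 ⟨x, hx, rfl⟩)

/-- The map `H(f) : H(X) → H(Y)` induced by a continuous `f : X → Y`, i.e. the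
restriction of the reindexing map `R_f`. -/
noncomputable def Hmap {X : Type u} {Y : Type v} [TopologicalSpace X] [TopologicalSpace Y]
    (f : C(X, Y)) : C(HSp X, HSp Y) where
  toFun x := ⟨reindex f x.1, reindex_mapsTo f x.2⟩
  continuous_toFun :=
    Continuous.subtype_mk ((continuous_reindex f).comp continuous_subtype_val) _

/-- The unit `η_X : X → H(X)`, `x ↦ e_X(const x)`. -/
noncomputable def etaMap (X : Type u) [TopologicalSpace X] : C(X, HSp X) where
  toFun x := toH (fun _ : ℝ => x) (isStep_const x)
  continuous_toFun := by
    refine Continuous.subtype_mk (continuous_pi fun s => ?_) _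
    simp only [eHM, intervalIntegral.integral_const]
    exact continuous_const.mul ((s.φ.continuous).const_smul (s.b - s.a))
/-- The index (0-based) of the subinterval `[i/n, (i+1)/n)` of `[0,1)` containing `s`
(as a natural number, clipped to `n - 1`). -/
noncomputable def stepIdxNat (n : ℕ) (s : ℝ) : ℕ := min ⌊s * n⌋₊ (n - 1)

lemma stepIdxNat_eq {n j : ℕ} (hj : j < n) {s : ℝ}
    (h1 : (j : ℝ) / n ≤ s) (h2 : s < ((j : ℝ) + 1) / n) : stepIdxNat n s = j := by
  have hn : (0:ℝ) < n := by
    have : 0 < n := by omega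
    exact_mod_cast this
  have h1' : (j : ℝ) ≤ s * n := by rw [div_le_iff₀ hn] at h1; exact h1
  have h2' : s * n < (j : ℝ) + 1 := by rw [lt_div_iff₀ hn] at h2; exact h2
  have hfl : ⌊s * n⌋₊ = j := by
    rw [Nat.floor_eq_iff (le_trans (Nat.cast_nonneg j) h1')]
    exact ⟨h1', h2'⟩
  unfold stepIdxNat
  omega

lemma isStep_stepIdxNat (n : ℕ) : IsStep (stepIdxNat n) := by
  rcases Nat.eq_zero_or_pos n with rfl | hn
  · exact ⟨1, fun j => (j : ℝ), le_refl 1, by simp, by simp, fun j _ => by simp,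
      fun j hj s hs => by simp [stepIdxNat]⟩
  · have hnR : (0:ℝ) < n := by exact_mod_cast hn
    refine ⟨n, fun j => (j : ℝ) / n, hn, by simp, by field_simp,
      fun j hj => ?_, fun j hj s hs => ?_⟩
    · exact (div_lt_div_iff_of_pos_right hnR).mpr (by push_cast; linarith)
    · obtain ⟨hs1, hs2⟩ := hs
      have hs2' : s < ((j : ℝ) + 1) / n := by
        convert hs2 using 2
        all_goals first | rfl | (push_cast; ring)
      rw [stepIdxNat_eq hj hs1 hs2',
        stepIdxNat_eq hj (le_refl _) ((div_lt_div_iff_of_pos_right hnR).mpr (by linarith))]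
/-- The step function `β : [0,1) → K_n`, `β(s) = i` for `s ∈ [i/n, (i+1)/n)`,
with `K_n` realized as `Fin n` (0-based indexing). -/
noncomputable def stepIdx (n : ℕ) [NeZero n] (s : ℝ) : Fin n :=
  ⟨stepIdxNat n s, by
    have := NeZero.ne n
    unfold stepIdxNat
    omega⟩

lemma isStep_stepIdx (n : ℕ) [NeZero n] : IsStep (stepIdx n) := by
  have hn := NeZero.ne n
  have h : stepIdx n =
      (fun m : ℕ => (⟨min m (n - 1), by omega⟩ : Fin n)) ∘ stepIdxNat n := by
    funext s
    apply Fin.ext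
    simp [stepIdx, stepIdxNat, min_assoc]
  rw [h]
  exact isStep_comp _ (isStep_stepIdxNat n)

/-- The diagonal step function `α : [0,1) → K_n × K_n`, `α(s) = (i,i)` for
`s ∈ [i/n, (i+1)/n)`. -/
noncomputable def alphaDiag (n : ℕ) [NeZero n] : ℝ → Fin n × Fin n :=
  fun s => (stepIdx n s, stepIdx n s)

lemma isStep_alphaDiag (n : ℕ) [NeZero n] : IsStep (alphaDiag n) :=
  isStep_comp (fun i : Fin n => (i, i)) (isStep_stepIdx n)

/-- The step function `α_i : [0,1) → K_n × K_n`, `α_i(s) = (i,j)` for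
`s ∈ [j/n, (j+1)/n)`. -/
noncomputable def alphaRow (n : ℕ) [NeZero n] (i : Fin n) : ℝ → Fin n × Fin n :=
  fun s => (i, stepIdx n s)

lemma isStep_alphaRow (n : ℕ) [NeZero n] (i : Fin n) : IsStep (alphaRow n i) :=
  isStep_comp (fun j : Fin n => (i, j)) (isStep_stepIdx n)

/-- The step function `A_n : [0,1) → H(K_n × K_n)`, `A_n(s) = e(α_i)` for
`s ∈ [i/n, (i+1)/n)`. -/
noncomputable def An (n : ℕ) [NeZero n] : ℝ → HSp (Fin n × Fin n) :=
  fun s => toH (alphaRow n (stepIdx n s)) (isStep_alphaRow n _)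

lemma isStep_An (n : ℕ) [NeZero n] : IsStep (An n) :=
  isStep_comp (fun i : Fin n => toH (alphaRow n i) (isStep_alphaRow n i)) (isStep_stepIdx n)

/-- The step function `γ_i^{(n)} : [0,1) → D = {0,1}` which is `1` on
`[i/n, (i+1)/n)` and `0` elsewhere, with `D` realized as `Bool`. -/
noncomputable def gammaStep (n i : ℕ) : ℝ → Bool := fun s => decide (stepIdxNat n s = i)

lemma isStep_gammaStep (n i : ℕ) : IsStep (gammaStep n i) :=
  isStep_comp (fun m : ℕ => decide (m = i)) (isStep_stepIdxNat n)

/-- The step function `B_n : [0,1) → H(D)`, `B_n(s) = e(γ_i^{(n)})` for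
`s ∈ [i/n, (i+1)/n)`. -/
noncomputable def Bn (n : ℕ) : ℝ → HSp Bool :=
  fun s => toH (gammaStep n (stepIdxNat n s)) (isStep_gammaStep n _)

lemma isStep_Bn (n : ℕ) : IsStep (Bn n) :=
  isStep_comp (fun m : ℕ => toH (gammaStep n m) (isStep_gammaStep n m)) (isStep_stepIdxNat n)


lemma eval_const_on_closure {ι : Type*} {S : Set (ι → ℝ)} {ν : ι → ℝ} (hν : ν ∈ closure S)
    {s : ι} {c : ℝ} (h : ∀ y ∈ S, y s = c) : ν s = c :=
  closure_minimal h (isClosed_eq (continuous_apply s) continuous_const) hν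

lemma ae_ne_one : ∀ᵐ s : ℝ, s ≠ (1:ℝ) := by
  have h : {s : ℝ | ¬ s ≠ 1} = {1} := by ext s; simp
  rw [MeasureTheory.ae_iff, h]
  exact MeasureTheory.measure_singleton 1

lemma step_mono {k : ℕ} {t : ℕ → ℝ} (hm : ∀ j < k, t j < t (j+1)) :
    ∀ i j, i ≤ j → j ≤ k → t i ≤ t j := by
  intro i j hij hjk
  induction j with
  | zero => simp [Nat.le_zero.1 hij]
  | succ n ih =>
    rcases Nat.lt_or_ge i (n+1) with h | h
    · exact le_trans (ih (by omega) (by omega)) (le_of_lt (hm n (by omega)))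
    · have : i = n+1 := by omega
      simp [this]

lemma step_find {k : ℕ} {t : ℕ → ℝ} (hk : 1 ≤ k) (h0 : t 0 = 0) (h1 : t k = 1)
    (hm : ∀ j < k, t j < t (j+1)) {s : ℝ} (hs : s ∈ Set.Ico (0:ℝ) 1) :
    ∃ j, j < k ∧ s ∈ Set.Ico (t j) (t (j+1)) ∧
      ∀ i, i < k → s ∈ Set.Ico (t i) (t (i+1)) → i = j := by
  classical
  set j := Nat.findGreatest (fun i => t i ≤ s) (k-1) with hj
  have hP0 : t 0 ≤ s := by rw [h0]; exact hs.1
  have hPj : t j ≤ s := by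
    rw [hj]; exact Nat.findGreatest_spec (P := fun i => t i ≤ s) (Nat.zero_le _) hP0
  have hjle : j ≤ k - 1 := by rw [hj]; exact Nat.findGreatest_le _
  have hjk : j < k := by omega
  have hlt : s < t (j+1) := by
    rcases Nat.lt_or_ge j (k-1) with h | h
    · have hng : ¬ t (j+1) ≤ s := by
        apply Nat.findGreatest_is_greatest (P := fun i => t i ≤ s) (n := k-1)
        · rw [← hj]; omega
        · omega
      exact lt_of_not_ge hng
    · have hje : j + 1 = k := by omega
      rw [hje, h1]; exact hs.2
  refine ⟨j, hjk, ⟨hPj, hlt⟩, ?_⟩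
  intro i hik hi
  by_contra hne
  rcases Nat.lt_or_ge i j with h | h
  · have hle : t (i+1) ≤ t j := step_mono hm _ _ (by omega) (by omega)
    exact absurd (lt_of_lt_of_le hi.2 hle) (not_lt.mpr hPj)
  · have hle : t (j+1) ≤ t i := step_mono hm _ _ (by omega) (by omega)
    exact absurd hlt (not_lt.mpr (hle.trans hi.1))

lemma isStep_integrableOn {X : Type u} {γ : ℝ → X} (hγ : IsStep γ) (f : X → ℝ) :
    IntegrableOn (fun s => f (γ s)) (Set.Ioc (0:ℝ) 1) := by
  obtain ⟨k, t, hk, h0, h1, hm, hc⟩ := hγ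
  set G : ℝ → ℝ := fun s =>
    ∑ j ∈ Finset.range k, (Set.Ico (t j) (t (j+1))).indicator (fun _ => f (γ (t j))) s with hG
  have hGint : IntegrableOn G (Set.Ioc (0:ℝ) 1) := by
    apply MeasureTheory.integrable_finset_sum
    intro j hj
    exact (MeasureTheory.integrableOn_const measure_Ioc_lt_top.ne).indicator
      measurableSet_Ico
  have hae : G =ᵐ[volume.restrict (Set.Ioc (0:ℝ) 1)] (fun s => f (γ s)) := by
    filter_upwards [ae_restrict_mem measurableSet_Ioc, ae_restrict_of_ae ae_ne_one]
      with s hsmem hs1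
    have hs : s ∈ Set.Ico (0:ℝ) 1 := ⟨le_of_lt hsmem.1, lt_of_le_of_ne hsmem.2 hs1⟩
    obtain ⟨j, hjk, hsj, huniq⟩ := step_find hk h0 h1 hm hs
    have hGs : G s = f (γ (t j)) := by
      rw [show G s = ∑ i ∈ Finset.range k, (Set.Ico (t i) (t (i+1))).indicator (fun _ => f (γ (t i))) s from rfl, Finset.sum_eq_single j]
      · simp [Set.indicator_of_mem hsj]
      · intro i hi hij
        exact Set.indicator_of_notMem (fun hmem => hij (huniq i (Finset.mem_range.1 hi) hmem)) _
      · intro h; exact absurd (Finset.mem_range.2 hjk) h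
    rw [hGs, hc j hjk s hsj]
  exact hGint.congr hae

lemma isStep_intervalIntegrable {X : Type u} {γ : ℝ → X} (hγ : IsStep γ) (f : X → ℝ)
    {a b : ℝ} (ha : 0 ≤ a) (ha1 : a ≤ 1) (hb0 : 0 ≤ b) (hb : b ≤ 1) :
    IntervalIntegrable (fun s => f (γ s)) volume a b :=
  ⟨(isStep_integrableOn hγ f).mono_set
      (fun s hs => ⟨lt_of_le_of_lt ha hs.1, le_trans hs.2 hb⟩),
   (isStep_integrableOn hγ f).mono_set
      (fun s hs => ⟨lt_of_le_of_lt hb0 hs.1, le_trans hs.2 ha1⟩)⟩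

lemma mem_closure_of_finset_approx {ι : Type*} {S : Set (ι → ℝ)} {ν : ι → ℝ}
    (h : ∀ I : Finset ι, ∀ ε > (0:ℝ), ∃ y ∈ S, ∀ i ∈ I, |y i - ν i| < ε) :
    ν ∈ closure S := by
  rw [mem_closure_iff]
  intro U hU hνU
  obtain ⟨I, u, hu, hsub⟩ := isOpen_pi_iff.1 hU ν hνU
  classical
  have hch : ∀ i ∈ I, ∃ δ > (0:ℝ), Metric.ball (ν i) δ ⊆ u i := fun i hi =>
    Metric.isOpen_iff.1 (hu i hi).1 _ (hu i hi).2
  choose! δ hδ hball using hch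
  rcases I.eq_empty_or_nonempty with rfl | hne
  · obtain ⟨y, hyS, -⟩ := h ∅ 1 one_pos
    exact ⟨y, hsub (by simp), hyS⟩
  · obtain ⟨y, hyS, hy⟩ := h I (I.inf' hne δ) ((Finset.lt_inf'_iff hne).2 fun i hi => hδ i hi)
    refine ⟨y, hsub (Set.mem_pi.2 fun i hi => ?_), hyS⟩
    exact hball i hi (by
      rw [Metric.mem_ball, Real.dist_eq]
      exact lt_of_lt_of_le (hy i hi) (Finset.inf'_le δ hi))

lemma approx_of_mem_closure {ι : Type*} {S : Set (ι → ℝ)} {ν : ι → ℝ} (hν : ν ∈ closure S)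
    (I : Finset ι) {ε : ℝ} (hε : 0 < ε) : ∃ y ∈ S, ∀ i ∈ I, |y i - ν i| < ε := by
  classical
  have hU : IsOpen {z : ι → ℝ | ∀ i ∈ I, |z i - ν i| < ε} := by
    have he : {z : ι → ℝ | ∀ i ∈ I, |z i - ν i| < ε} = ⋂ i ∈ I, {z | |z i - ν i| < ε} := by
      ext z; simp
    rw [he]
    exact isOpen_biInter_finset fun i _ =>
      IsOpen.preimage (((continuous_apply i).sub continuous_const).abs) isOpen_Iio
  obtain ⟨y, hyU, hyS⟩ := mem_closure_iff.1 hν _ hU (fun i hi => by simpa using hε)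
  exact ⟨y, hyS, hyU⟩

/-- `x ∈ supp ν` iff for each neighborhood `O` of `x` there is `a > 0` with
`ν(ψ, 0, 1) ≥ a` for every continuous `ψ : X → [0,1]` with `ψ ≡ 1` on `O`. -/
theorem mem_supp_iff {X : Type u} [TopologicalSpace X] [CompactSpace X] [T2Space X]
    (ν : SIdx X → ℝ) (hν : ν ∈ HSet X) (x : X) :
    x ∈ suppH ν ↔
      ∀ O : Set X, IsOpen O → x ∈ O →
        ∃ a > (0:ℝ), ∀ ψ : C(X, ℝ), (∀ y, ψ y ∈ Set.Icc (0:ℝ) 1) →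
          (∀ y ∈ O, ψ y = 1) →
            a ≤ ν ⟨ψ, 0, 1, le_refl 0, zero_lt_one, le_refl 1⟩ := by

  classical
  constructor
  · intro hx O hO hxO
    by_contra hcon
    push_neg at hcon
    have hmem : ν ∈ HSetOn X Oᶜ := by
      by_cases hOX : ∀ y : X, y ∈ O
      · exfalso
        obtain ⟨ψ, hψ01, hψO, hψν⟩ := hcon (1/2) (by norm_num)
        have h1 : ν ⟨ψ, 0, 1, le_refl 0, zero_lt_one, le_refl 1⟩ = 1 := by
          apply eval_const_on_closure hν
          rintro _ ⟨α, hα, rfl⟩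
          have hone : ∀ t : ℝ, ψ (α t) = 1 := fun t => hψO _ (hOX _)
          simp [eHM, hone]
        rw [h1] at hψν
        norm_num at hψν
      · obtain ⟨p, hp⟩ := not_forall.1 hOX
        unfold HSetOn
        apply mem_closure_of_finset_approx
        intro I ε hε
        set M : ℝ := 1 + ∑ i ∈ I, ‖i.φ‖ with hM
        have hM1 : (1:ℝ) ≤ M :=
          le_add_of_nonneg_right (Finset.sum_nonneg fun i _ => norm_nonneg _)
        have hMf : ∀ i ∈ I, ∀ z : X, |i.φ z| ≤ M := by
          intro i hi z
          have h1 := i.φ.norm_coe_le_norm z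
          rw [Real.norm_eq_abs] at h1
          have h2 : ‖i.φ‖ ≤ ∑ j ∈ I, ‖j.φ‖ :=
            Finset.single_le_sum (fun j _ => norm_nonneg _) hi
          rw [hM]; linarith
        set C : ℝ := 1 + ∑ i ∈ I, 1/(i.b - i.a) with hC
        have hC1 : (1:ℝ) ≤ C :=
          le_add_of_nonneg_right
            (Finset.sum_nonneg fun i _ => div_nonneg zero_le_one (sub_pos.2 i.hab).le)
        have hCf : ∀ i ∈ I, 1/(i.b - i.a) ≤ C := by
          intro i hi
          have h2 : 1/(i.b-i.a) ≤ ∑ j ∈ I, 1/(j.b - j.a) :=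
            Finset.single_le_sum (fun j _ => div_nonneg zero_le_one (sub_pos.2 j.hab).le) hi
          rw [hC]; linarith
        set δ : ℝ := ε / (2 * (1 + 4*M*C)) with hδdef
        have hδ : 0 < δ := div_pos hε (by nlinarith)
        obtain ⟨ψ, hψ01, hψO, hψν⟩ := hcon δ hδ
        set sψ : SIdx X := ⟨ψ, 0, 1, le_refl 0, zero_lt_one, le_refl 1⟩ with hsψ
        have hψν' : ν sψ < δ := by rw [hsψ]; exact hψν
        obtain ⟨y, hyS, hy⟩ := approx_of_mem_closure hν (insert sψ I) hδ
        obtain ⟨β, hβ, rfl⟩ := hyS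
        have hint : ∫ t in (0:ℝ)..1, ψ (β t) < 2*δ := by
          have h1 := hy sψ (Finset.mem_insert_self _ _)
          have h2 : eHM β sψ = ∫ t in (0:ℝ)..1, ψ (β t) := by
            rw [hsψ]; simp [eHM]
          rw [h2] at h1
          have h3 := abs_lt.1 h1
          linarith [h3.1, h3.2]
        set g : X → X := fun z => if z ∈ O then p else z with hg
        have hgA : ∀ z : X, g z ∈ Oᶜ := by
          intro z
          by_cases hz : z ∈ O
          · simp only [hg, if_pos hz, Set.mem_compl_iff]; exact hp
          · simp only [hg, if_neg hz, Set.mem_compl_iff]; exact hz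
        refine ⟨eHM (g ∘ β), ⟨g ∘ β, ⟨isStep_comp g hβ, fun t _ => hgA _⟩, rfl⟩, ?_⟩
        intro i hiI
        have hba : (0:ℝ) < i.b - i.a := sub_pos.2 i.hab
        have h0ψ : ∀ z : X, (0:ℝ) ≤ ψ z := fun z => (hψ01 z).1
        have hb0 : (0:ℝ) ≤ i.b := le_trans i.ha i.hab.le
        have ha1 : i.a ≤ 1 := le_trans i.hab.le i.hb
        have Iφα : IntervalIntegrable (fun t => i.φ (g (β t))) MeasureTheory.volume i.a i.b :=
          isStep_intervalIntegrable hβ (fun z => i.φ (g z)) i.ha ha1 hb0 i.hb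
        have Iφβ : IntervalIntegrable (fun t => i.φ (β t)) MeasureTheory.volume i.a i.b :=
          isStep_intervalIntegrable hβ i.φ i.ha ha1 hb0 i.hb
        have Iψβab : IntervalIntegrable (fun t => ψ (β t)) MeasureTheory.volume i.a i.b :=
          isStep_intervalIntegrable hβ ψ i.ha ha1 hb0 i.hb
        have Iψβ01 : IntervalIntegrable (fun t => ψ (β t)) MeasureTheory.volume 0 1 :=
          isStep_intervalIntegrable hβ ψ le_rfl zero_le_one zero_le_one le_rfl
        have hpt : ∀ t : ℝ, |i.φ (g (β t)) - i.φ (β t)| ≤ 2*M*ψ (β t) := by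
          intro t
          by_cases ht : β t ∈ O
          · have h1 := hMf i hiI (g (β t))
            have h2 := hMf i hiI (β t)
            have h3 : ψ (β t) = 1 := hψO _ ht
            rw [h3]
            calc |i.φ (g (β t)) - i.φ (β t)| ≤ |i.φ (g (β t))| + |i.φ (β t)| := abs_sub _ _
              _ ≤ 2*M*1 := by linarith
          · have he : g (β t) = β t := by simp only [hg, if_neg ht]
            rw [he, sub_self, abs_zero]
            have := h0ψ (β t)
            nlinarith
        have key : |eHM (g ∘ β) i - eHM β i| ≤ 4*M*C*δ := by
          have e1 : eHM (g ∘ β) i - eHM β i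
              = (1/(i.b-i.a)) * ((∫ t in i.a..i.b, i.φ (g (β t)))
                - ∫ t in i.a..i.b, i.φ (β t)) := by
            simp only [eHM, Function.comp_apply]
            ring
          have hd : (∫ t in i.a..i.b, i.φ (g (β t))) - ∫ t in i.a..i.b, i.φ (β t)
              = ∫ t in i.a..i.b, (i.φ (g (β t)) - i.φ (β t)) :=
            (intervalIntegral.integral_sub Iφα Iφβ).symm
          rw [e1, hd, abs_mul, abs_of_pos (by positivity : (0:ℝ) < 1/(i.b-i.a))]
          have h2 : |∫ t in i.a..i.b, (i.φ (g (β t)) - i.φ (β t))|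
              ≤ ∫ t in i.a..i.b, |i.φ (g (β t)) - i.φ (β t)| :=
            intervalIntegral.abs_integral_le_integral_abs i.hab.le
          have h3 : (∫ t in i.a..i.b, |i.φ (g (β t)) - i.φ (β t)|)
              ≤ ∫ t in i.a..i.b, 2*M*ψ (β t) :=
            intervalIntegral.integral_mono_on i.hab.le (Iφα.sub Iφβ).abs
              (Iψβab.const_mul (2*M)) (fun t _ => hpt t)
          have h4 : (∫ t in i.a..i.b, 2*M*ψ (β t)) = 2*M*∫ t in i.a..i.b, ψ (β t) :=
            intervalIntegral.integral_const_mul _ _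
          have h5 : (∫ t in i.a..i.b, ψ (β t)) ≤ ∫ t in (0:ℝ)..1, ψ (β t) :=
            intervalIntegral.integral_mono_interval i.ha i.hab.le i.hb
              (Filter.Eventually.of_forall fun t => h0ψ _) Iψβ01
          have h6 : |∫ t in i.a..i.b, (i.φ (g (β t)) - i.φ (β t))| ≤ 2*M*(2*δ) := by
            nlinarith [hint, h2, h3, h4, h5, hM1]
          calc (1/(i.b-i.a)) * |∫ t in i.a..i.b, (i.φ (g (β t)) - i.φ (β t))|
              ≤ (1/(i.b-i.a)) * (2*M*(2*δ)) :=
                mul_le_mul_of_nonneg_left h6 (by positivity)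
            _ ≤ C * (2*M*(2*δ)) := by
                have : (0:ℝ) ≤ 2*M*(2*δ) := by nlinarith
                exact mul_le_mul_of_nonneg_right (hCf i hiI) this
            _ = 4*M*C*δ := by ring
        have hβi := hy i (Finset.mem_insert_of_mem hiI)
        have htri : |eHM (g ∘ β) i - ν i| ≤ |eHM (g ∘ β) i - eHM β i| + |eHM β i - ν i| :=
          abs_sub_le _ _ _
        have hfin : δ * (2 * (1 + 4*M*C)) = ε := by
          rw [hδdef]; field_simp
        calc |eHM (g ∘ β) i - ν i| ≤ |eHM (g ∘ β) i - eHM β i| + |eHM β i - ν i| := htri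
          _ < 4*M*C*δ + δ := by linarith [key, hβi]
          _ < ε := by nlinarith [hδ, hM1, hC1]
    exact (Set.mem_sInter.1 hx Oᶜ ⟨hO.isClosed_compl, hmem⟩) hxO
  · intro h
    refine Set.mem_sInter.2 ?_
    rintro A ⟨hAc, hAν⟩
    by_contra hxA
    obtain ⟨tset, htmem, htc, htsub⟩ :=
      exists_mem_nhds_isClosed_subset (hAc.isOpen_compl.mem_nhds hxA)
    set O : Set X := interior tset with hOdef
    have hxO : x ∈ O := mem_interior_iff_mem_nhds.2 htmem
    have hOsub : closure O ⊆ Aᶜ := fun z hz => htsub ((closure_minimal interior_subset htc) hz)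
    have hdisj : Disjoint A (closure O) := Set.disjoint_left.2 fun z hzA hzC => hOsub hzC hzA
    obtain ⟨ψ, hψ0, hψ1, hψ01⟩ :=
      exists_continuous_zero_one_of_isClosed hAc isClosed_closure hdisj
    obtain ⟨a, ha, hkey⟩ := h O isOpen_interior hxO
    have hle := hkey ψ hψ01 (fun y hy => by
      have := hψ1 (subset_closure hy); simpa using this)
    have hzero : ν ⟨ψ, 0, 1, le_refl 0, zero_lt_one, le_refl 1⟩ = 0 := by
      apply eval_const_on_closure hAν
      rintro _ ⟨α, ⟨hα, hαA⟩, rfl⟩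
      have hz : (∫ t in (0:ℝ)..1, ψ (α t)) = 0 := by
        have hcongr : ∀ᵐ s : ℝ, s ∈ Set.uIoc (0:ℝ) 1 → ψ (α s) = (fun _ : ℝ => (0:ℝ)) s := by
          filter_upwards [ae_ne_one] with s hs1 hsI
          rw [Set.uIoc_of_le zero_le_one] at hsI
          have hsm : s ∈ Set.Ico (0:ℝ) 1 := ⟨hsI.1.le, lt_of_le_of_ne hsI.2 hs1⟩
          have := hψ0 (hαA s hsm)
          simpa using this
        rw [intervalIntegral.integral_congr_ae hcongr]
        simp
      simp [eHM, hz]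
    rw [hzero] at hle
    linarith
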